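/- The genus number of the compact simply connected simple Lie group of type G_2 (the number of conjugacy classes of stabilizers of torus elements in its Weyl group) is 6. -/

import Mathlib

/-!
STATEMENT 13: The genus number of the compact simply connected simple Lie group of
type `G₂` — the number of conjugacy classes of stabilizers of maximal-torus elements
in its Weyl group — is `6`.

The Weyl group of `G₂` is `S₃ ⋊ S₂` (dihedral of order 12; since the `S₂`-factor,
inversion, commutes with the permutations, it is `S₃ × S₂`, realized here as
`Equiv.Perm (Fin 3) × ℤˣ`).  It acts on the maximal torus
`T = {(z₁,z₂,z₃) ∈ (S¹)³ : z₁z₂z₃ = 1}` — written additively as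
`{t ∈ (ℝ/ℤ)³ : t₁ + t₂ + t₃ = 0}` — with `S₃` permuting the coordinates and the
nontrivial element of `S₂` acting by (complex-conjugation) inversion.
-/

open Pointwise

/-- The maximal torus of `G₂`: triples in `(ℝ/ℤ)³ ≅ (S¹)³` summing to `0`
(multiplicatively: with product `1`). -/
def G2Torus : Type := {t : Fin 3 → AddCircle (1 : ℝ) // ∑ i, t i = 0}

/-- The Weyl group `S₃ ⋊ S₂ ≅ S₃ × S₂` of `G₂` acting on the torus: permutations of
the three coordinates, and global inversion. -/
noncomputable instance weylG2Action : MulAction (Equiv.Perm (Fin 3) × ℤˣ) G2Torus where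
  smul w t := ⟨fun i => ((w.2 : ℤ)) • t.1 (w.1⁻¹ i), by
    rw [← Finset.smul_sum, Equiv.sum_comp (w.1⁻¹ : Equiv.Perm (Fin 3)) t.1, t.2,
      smul_zero]⟩
  one_smul t := by
    apply Subtype.ext
    funext i
    show (((1 : Equiv.Perm (Fin 3) × ℤˣ).2 : ℤ))
        • t.1 ((1 : Equiv.Perm (Fin 3) × ℤˣ).1⁻¹ i) = t.1 i
    simp
  mul_smul w w' t := by
    apply Subtype.ext
    funext i
    show (((w * w').2 : ℤ)) • t.1 ((w * w').1⁻¹ i)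
      = ((w.2 : ℤ)) • ((w'.2 : ℤ)) • t.1 (w'.1⁻¹ (w.1⁻¹ i))
    simp [mul_inv_rev, Units.val_mul, mul_smul]

abbrev W : Type := Equiv.Perm (Fin 3) × ℤˣ
def s01 : Equiv.Perm (Fin 3) := Equiv.swap 0 1

lemma smul_coe (w : W) (t : G2Torus) (i : Fin 3) :
    (w • t).1 i = ((w.2 : ℤ)) • t.1 (w.1⁻¹ i) := rfl

lemma mem_stab (w : W) (t : G2Torus) :
    w ∈ MulAction.stabilizer W t ↔ ∀ i, ((w.2:ℤ)) • t.1 (w.1⁻¹ i) = t.1 i := by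
  rw [MulAction.mem_stabilizer_iff]
  constructor
  · intro h i; exact congrFun (congrArg Subtype.val h) i
  · intro h; exact Subtype.ext (funext h)

lemma mem_stab₃ (σ : Equiv.Perm (Fin 3)) (ε : ℤˣ) (t : G2Torus) :
    (σ, ε) ∈ MulAction.stabilizer W t ↔
      ((ε:ℤ) • t.1 (σ⁻¹ 0) = t.1 0 ∧ (ε:ℤ) • t.1 (σ⁻¹ 1) = t.1 1 ∧
        (ε:ℤ) • t.1 (σ⁻¹ 2) = t.1 2) := by
  rw [mem_stab]
  constructor
  · intro h; exact ⟨h 0, h 1, h 2⟩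
  · rintro ⟨h0, h1, h2⟩ i; fin_cases i <;> assumption

lemma hsum (t : G2Torus) : t.1 0 + t.1 1 + t.1 2 = 0 := by
  have := t.2
  rwa [Fin.sum_univ_three] at this

def H2 : Subgroup W where
  carrier := {x | x = 1 ∨ x = (s01, 1)}
  one_mem' := Or.inl rfl
  mul_mem' := by rintro a b (rfl | rfl) (rfl | rfl) <;> simp <;> decide
  inv_mem' := by rintro a (rfl | rfl) <;> simp <;> decide

def H3 : Subgroup W where
  carrier := {x | x = 1 ∨ x = (s01, -1)}
  one_mem' := Or.inl rfl
  mul_mem' := by rintro a b (rfl | rfl) (rfl | rfl) <;> simp <;> decide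
  inv_mem' := by rintro a (rfl | rfl) <;> simp <;> decide

def H4 : Subgroup W where
  carrier := {x | x.1 = 1 ∨ x.1 = s01}
  one_mem' := Or.inl rfl
  mul_mem' := by
    rintro ⟨a, ea⟩ ⟨b, eb⟩ h h'
    simp only [Set.mem_setOf_eq] at *
    rcases h with rfl | rfl <;> rcases h' with rfl | rfl <;> simp <;> decide
  inv_mem' := by
    rintro ⟨a, ea⟩ h
    simp only [Set.mem_setOf_eq] at *
    rcases h with rfl | rfl <;> simp <;> decide

def H5 : Subgroup W := MonoidHom.ker (MonoidHom.snd (Equiv.Perm (Fin 3)) ℤˣ)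

lemma mem_H2 (x : W) : x ∈ H2 ↔ x = 1 ∨ x = (s01, 1) := Iff.rfl
lemma mem_H3 (x : W) : x ∈ H3 ↔ x = 1 ∨ x = (s01, -1) := Iff.rfl
lemma mem_H4 (x : W) : x ∈ H4 ↔ x.1 = 1 ∨ x.1 = s01 := Iff.rfl
lemma mem_H5 (x : W) : x ∈ H5 ↔ x.2 = 1 := Iff.rfl
section Core
variable (t : G2Torus)

lemma fin3 (j : Fin 3) : j = 0 ∨ j = 1 ∨ j = 2 := by omega

lemma perm_fix2 : ∀ σ : Equiv.Perm (Fin 3), σ 2 = 2 → σ = 1 ∨ σ = s01 := by decide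

lemma perm_invol : ∀ σ : Equiv.Perm (Fin 3), σ * σ = 1 →
    σ = 1 ∨ σ = Equiv.swap 0 1 ∨ σ = Equiv.swap 0 2 ∨ σ = Equiv.swap 1 2 := by decide

lemma stab_top (h : ∀ i, t.1 i = 0) : MulAction.stabilizer W t = ⊤ := by
  ext ⟨σ, ε⟩
  simp only [Subgroup.mem_top, iff_true]
  rw [mem_stab]
  intro i
  show (ε:ℤ) • t.1 (σ⁻¹ i) = t.1 i
  rw [h, h, smul_zero]

lemma stab_H5 (hc : ∀ i, t.1 i = t.1 0) (h0 : t.1 0 ≠ 0) :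
    MulAction.stabilizer W t = H5 := by
  ext ⟨σ, ε⟩
  rw [mem_stab₃, mem_H5]
  constructor
  · rintro ⟨e0, -, -⟩
    rcases Int.units_eq_one_or ε with rfl | rfl
    · rfl
    · exfalso
      rw [hc (σ⁻¹ 0)] at e0
      simp only [Units.val_neg, Units.val_one, neg_zsmul, one_zsmul] at e0
      have h2 : t.1 0 + t.1 0 = 0 := by nth_rewrite 1 [← e0]; exact neg_add_cancel _
      have h3 := hsum t
      rw [hc 1, hc 2, h2, zero_add] at h3
      exact h0 h3
  · intro he
    have : ε = 1 := he
    subst this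
    simp only [Units.val_one, one_zsmul]
    exact ⟨by rw [hc (σ⁻¹ 0)], by rw [hc (σ⁻¹ 1), hc 1], by rw [hc (σ⁻¹ 2), hc 2]⟩
end Core
section TwoEq
variable (t : G2Torus)

lemma perm_app : ((1 : Equiv.Perm (Fin 3))⁻¹ 0 = 0 ∧ (1 : Equiv.Perm (Fin 3))⁻¹ 1 = 1 ∧
    (1 : Equiv.Perm (Fin 3))⁻¹ 2 = 2) ∧ (s01⁻¹ 0 = 1 ∧ s01⁻¹ 1 = 0 ∧ s01⁻¹ 2 = 2) := by decide

lemma stab_two_eq_fwd (hab : t.1 1 = t.1 0) (hac : t.1 2 ≠ t.1 0)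
    (σ : Equiv.Perm (Fin 3)) (ε : ℤˣ) (h : (σ, ε) ∈ MulAction.stabilizer W t) :
    (σ = 1 ∨ σ = s01) ∧ (ε = 1 ∨ (ε = -1 ∧ t.1 0 + t.1 0 = 0)) := by
  rw [mem_stab₃] at h
  obtain ⟨e0, e1, e2⟩ := h
  have hc2 : t.1 2 = -(t.1 0 + t.1 1) := by
    have h3 := hsum t
    rw [eq_neg_iff_add_eq_zero, add_comm]
    exact h3
  have key : ∀ j : Fin 3, (j = 0 ∨ j = 1) → (ε:ℤ) • t.1 j = t.1 2 → False := by
    rintro j hj e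
    have hj' : t.1 j = t.1 0 := by
      rcases hj with rfl | rfl
      · rfl
      · exact hab
    rw [hj'] at e
    rcases Int.units_eq_one_or ε with rfl | rfl
    · simp only [Units.val_one, one_zsmul] at e
      exact hac e.symm
    · simp only [Units.val_neg, Units.val_one, neg_zsmul, one_zsmul] at e
      rw [hc2, hab, neg_inj] at e
      have h0 : t.1 0 = 0 := right_eq_add.mp e
      apply hac
      rw [hc2, hab, h0]
      simp
  have hfix : σ⁻¹ 2 = 2 := by
    rcases fin3 (σ⁻¹ 2) with h' | h' | h'
    · exact absurd e2 (by rw [h']; exact fun e => key 0 (Or.inl rfl) e)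
    · exact absurd e2 (by rw [h']; exact fun e => key 1 (Or.inr rfl) e)
    · exact h'
  have hσ2 : σ 2 = 2 := by
    have : σ (σ⁻¹ 2) = 2 := Equiv.apply_symm_apply σ 2
    rwa [hfix] at this
  refine ⟨perm_fix2 σ hσ2, ?_⟩
  rcases Int.units_eq_one_or ε with rfl | rfl
  · exact Or.inl rfl
  · refine Or.inr ⟨rfl, ?_⟩
    have h0 : t.1 (σ⁻¹ 0) = t.1 0 := by
      rcases perm_fix2 σ hσ2 with rfl | rfl
      · rw [perm_app.1.1]
      · rw [perm_app.2.1]; exact hab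
    rw [h0] at e0
    simp only [Units.val_neg, Units.val_one, neg_zsmul, one_zsmul] at e0
    nth_rewrite 1 [← e0]
    exact neg_add_cancel _

lemma stab_two_eq_H4 (hab : t.1 1 = t.1 0) (hac : t.1 2 ≠ t.1 0)
    (h2 : t.1 0 + t.1 0 = 0) : MulAction.stabilizer W t = H4 := by
  have hc2 : t.1 2 = 0 := by
    have h3 := hsum t
    rwa [hab, h2, zero_add] at h3
  ext ⟨σ, ε⟩
  rw [mem_H4]
  constructor
  · intro h
    exact (stab_two_eq_fwd t hab hac σ ε h).1
  · intro h
    have hna : -(t.1 0) = t.1 0 := by rw [neg_eq_iff_add_eq_zero]; exact h2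
    rw [mem_stab₃]
    have hv : t.1 (σ⁻¹ 0) = t.1 0 ∧ t.1 (σ⁻¹ 1) = t.1 1 ∧ t.1 (σ⁻¹ 2) = t.1 2 := by
      rcases h with rfl | rfl
      · rw [perm_app.1.1, perm_app.1.2.1, perm_app.1.2.2]; exact ⟨rfl, rfl, rfl⟩
      · rw [perm_app.2.1, perm_app.2.2.1, perm_app.2.2.2]
        exact ⟨hab, by rw [hab], rfl⟩
    rw [hv.1, hv.2.1, hv.2.2]
    rcases Int.units_eq_one_or ε with rfl | rfl
    · simp only [Units.val_one, one_zsmul]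
      exact ⟨trivial, trivial, trivial⟩
    · simp only [Units.val_neg, Units.val_one, neg_zsmul, one_zsmul]
      exact ⟨hna, by rw [hab]; exact hna, by rw [hc2]; exact neg_zero⟩

lemma stab_two_eq_H2 (hab : t.1 1 = t.1 0) (hac : t.1 2 ≠ t.1 0)
    (h2 : t.1 0 + t.1 0 ≠ 0) : MulAction.stabilizer W t = H2 := by
  ext ⟨σ, ε⟩
  rw [mem_H2]
  constructor
  · intro h
    obtain ⟨hσ, hε⟩ := stab_two_eq_fwd t hab hac σ ε h
    rcases hε with rfl | ⟨-, hh⟩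
    · rcases hσ with rfl | rfl
      · exact Or.inl rfl
      · exact Or.inr rfl
    · exact absurd hh h2
  · intro h
    rw [mem_stab₃]
    have : (σ = 1 ∧ ε = 1) ∨ (σ = s01 ∧ ε = 1) := by
      rcases h with h | h
      · exact Or.inl ⟨congrArg Prod.fst h, congrArg Prod.snd h⟩
      · exact Or.inr ⟨congrArg Prod.fst h, congrArg Prod.snd h⟩
    rcases this with ⟨rfl, rfl⟩ | ⟨rfl, rfl⟩ <;>
      simp only [Units.val_one, one_zsmul]
    · rw [perm_app.1.1, perm_app.1.2.1, perm_app.1.2.2]; exact ⟨rfl, rfl, rfl⟩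
    · rw [perm_app.2.1, perm_app.2.2.1, perm_app.2.2.2]
      exact ⟨hab, by rw [hab], rfl⟩
end TwoEq

lemma ac_coe_add (x y : ℝ) : ((x + y : ℝ) : AddCircle (1:ℝ)) = (x : AddCircle (1:ℝ)) + y :=
  QuotientAddGroup.mk_add _ x y

lemma ac_one : ((1 : ℝ) : AddCircle (1:ℝ)) = 0 := AddCircle.coe_period 1

lemma ac_zero : ((0 : ℝ) : AddCircle (1:ℝ)) = 0 := QuotientAddGroup.mk_zero _

lemma ac_ne_zero {r : ℝ} (h0 : 0 < r) (h1 : r < 1) : (r : AddCircle (1:ℝ)) ≠ 0 := by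
  intro h
  obtain ⟨n, hn⟩ := (AddCircle.coe_eq_zero_iff (1:ℝ)).1 h
  rw [zsmul_eq_mul, mul_one] at hn
  have h2 : (0:ℝ) < n := hn ▸ h0
  have h3 : (n:ℝ) < 1 := hn ▸ h1
  have := Int.cast_pos.mp h2
  have : n < 1 := by exact_mod_cast h3
  omega

lemma ac_ne {r s : ℝ} (h0 : 0 < r - s) (h1 : r - s < 1) :
    (r : AddCircle (1:ℝ)) ≠ (s : AddCircle (1:ℝ)) := by
  intro h
  apply ac_ne_zero h0 h1
  rw [QuotientAddGroup.mk_sub, h, sub_self]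

lemma ac_two_torsion {x : AddCircle (1:ℝ)} (h : x + x = 0) :
    x = 0 ∨ x = ((1/2 : ℝ) : AddCircle (1:ℝ)) := by
  obtain ⟨r, rfl⟩ := QuotientAddGroup.mk_surjective x
  rw [← QuotientAddGroup.mk_add] at h
  obtain ⟨n, hn⟩ := (AddCircle.coe_eq_zero_iff (1:ℝ)).1 h
  rw [zsmul_eq_mul, mul_one] at hn
  rcases Int.even_or_odd n with ⟨k, hk⟩ | ⟨k, hk⟩
  · left
    have hr : r = (k : ℝ) := by
      have : ((k : ℤ) : ℝ) + k = r + r := by rw [← Int.cast_add, ← hk, hn]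
      linarith
    rw [hr]
    exact (AddCircle.coe_eq_zero_iff (1:ℝ)).2 ⟨k, by rw [zsmul_eq_mul, mul_one]⟩
  · right
    have hr : r - 1/2 = (k : ℝ) := by
      have : ((2*k + 1 : ℤ) : ℝ) = r + r := by rw [← hk, hn]
      push_cast at this
      linarith
    have : ((r - 1/2 : ℝ) : AddCircle (1:ℝ)) = 0 :=
      (AddCircle.coe_eq_zero_iff (1:ℝ)).2 ⟨k, by rw [zsmul_eq_mul, mul_one, hr]⟩
    rw [QuotientAddGroup.mk_sub] at this
    linear_combination (norm := abel) this
section Distinct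
variable (t : G2Torus)

lemma t_inj (h01 : t.1 0 ≠ t.1 1) (h02 : t.1 0 ≠ t.1 2) (h12 : t.1 1 ≠ t.1 2)
    {i j : Fin 3} (h : t.1 i = t.1 j) : i = j := by
  fin_cases i <;> fin_cases j <;> simp_all

lemma sigma_of_pos (h01 : t.1 0 ≠ t.1 1) (h02 : t.1 0 ≠ t.1 2) (h12 : t.1 1 ≠ t.1 2)
    (σ : Equiv.Perm (Fin 3)) (h : (σ, (1:ℤˣ)) ∈ MulAction.stabilizer W t) : σ = 1 := by
  rw [mem_stab] at h
  have hfix : ∀ i, σ⁻¹ i = i := by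
    intro i
    have := h i
    simp only [Units.val_one, one_zsmul] at this
    exact t_inj t h01 h02 h12 this
  have : σ⁻¹ = 1 := Equiv.ext hfix
  rw [← inv_inv σ, this, inv_one]

lemma stab_bot (h01 : t.1 0 ≠ t.1 1) (h02 : t.1 0 ≠ t.1 2) (h12 : t.1 1 ≠ t.1 2)
    (hz0 : t.1 0 ≠ 0) (hz1 : t.1 1 ≠ 0) (hz2 : t.1 2 ≠ 0) :
    MulAction.stabilizer W t = ⊥ := by
  ext ⟨σ, ε⟩
  rw [Subgroup.mem_bot]
  constructor
  · intro h
    rcases Int.units_eq_one_or ε with rfl | rfl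
    · rw [sigma_of_pos t h01 h02 h12 σ h]; rfl
    · exfalso
      have hsq : ((σ, (-1:ℤˣ)) : W) * (σ, -1) = (σ * σ, 1) := by
        rw [Prod.mk_mul_mk]
        norm_num
      have h2 := mul_mem h h
      rw [hsq] at h2
      have hσσ : σ * σ = 1 := sigma_of_pos t h01 h02 h12 _ h2
      rw [mem_stab₃] at h
      obtain ⟨e0, e1, e2⟩ := h
      simp only [Units.val_neg, Units.val_one, neg_zsmul, one_zsmul] at e0 e1 e2
      have h3 := hsum t
      rcases perm_invol σ hσσ with rfl | rfl | rfl | rfl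
      · -- σ = 1 : all coordinates 2-torsion
        rw [show ((1:Equiv.Perm (Fin 3)))⁻¹ 0 = 0 by decide] at e0
        rw [show ((1:Equiv.Perm (Fin 3)))⁻¹ 1 = 1 by decide] at e1
        have ha : t.1 0 + t.1 0 = 0 := by nth_rewrite 1 [← e0]; exact neg_add_cancel _
        have hb : t.1 1 + t.1 1 = 0 := by nth_rewrite 1 [← e1]; exact neg_add_cancel _
        rcases ac_two_torsion ha with h' | h' <;> rcases ac_two_torsion hb with h'' | h''
        · exact hz0 h'
        · exact hz0 h'
        · exact hz1 h''
        · exact h01 (h'.trans h''.symm)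
      · -- σ = swap 0 1
        rw [show (Equiv.swap (0:Fin 3) 1)⁻¹ 0 = 1 by decide] at e0
        apply hz2
        have : t.1 0 + t.1 1 = 0 := by
          nth_rewrite 1 [← e0]
          exact neg_add_cancel _
        rwa [this, zero_add] at h3
      · -- σ = swap 0 2
        rw [show (Equiv.swap (0:Fin 3) 2)⁻¹ 0 = 2 by decide] at e0
        apply hz1
        have hca : t.1 2 + t.1 0 = 0 := by
          nth_rewrite 1 [← e0]
          exact add_neg_cancel _
        rw [add_right_comm, add_comm (t.1 0) (t.1 2)] at h3
        rwa [hca, zero_add] at h3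
      · -- σ = swap 1 2
        rw [show (Equiv.swap (1:Fin 3) 2)⁻¹ 1 = 2 by decide] at e1
        apply hz0
        have hbc : t.1 1 + t.1 2 = 0 := by
          nth_rewrite 1 [← e1]
          exact neg_add_cancel _
        rwa [add_assoc, hbc, add_zero] at h3
  · intro h
    rw [h]
    exact one_mem _
lemma stab_H3 (h01 : t.1 0 ≠ t.1 1) (h02 : t.1 0 ≠ t.1 2) (h12 : t.1 1 ≠ t.1 2)
    (hc0 : t.1 2 = 0) : MulAction.stabilizer W t = H3 := by
  have hb : t.1 1 = -(t.1 0) := by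
    have h3 := hsum t
    rw [hc0, add_zero] at h3
    rw [eq_neg_iff_add_eq_zero, add_comm]
    exact h3
  ext ⟨σ, ε⟩
  rw [mem_H3]
  constructor
  · intro h
    rcases Int.units_eq_one_or ε with rfl | rfl
    · left
      rw [sigma_of_pos t h01 h02 h12 σ h]
      rfl
    · right
      rw [mem_stab₃] at h
      obtain ⟨e0, e1, e2⟩ := h
      simp only [Units.val_neg, Units.val_one, neg_zsmul, one_zsmul] at e0 e1 e2
      have k0 : σ⁻¹ 0 = 1 := by
        apply t_inj t h01 h02 h12
        rw [hb]
        exact neg_eq_iff_eq_neg.mp e0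
      have k1 : σ⁻¹ 1 = 0 := by
        apply t_inj t h01 h02 h12
        rw [hb] at e1
        exact neg_inj.mp e1
      have k2 : σ⁻¹ 2 = 2 := by
        apply t_inj t h01 h02 h12
        rw [hc0] at e2 ⊢
        exact neg_eq_zero.mp e2
      have hinv : σ⁻¹ = s01 := by
        apply Equiv.ext
        intro i
        rcases fin3 i with rfl | rfl | rfl
        · rw [k0]; decide
        · rw [k1]; decide
        · rw [k2]; decide
      have : σ = s01 := by
        rw [← inv_inv σ, hinv]
        decide
      rw [this]
  · intro hmem
    rcases hmem with h | h
    · rw [h]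
      exact one_mem _
    · rw [show ((σ, ε) : W) = ((s01 : Equiv.Perm (Fin 3)), (-1 : ℤˣ)) from h]
      rw [mem_stab₃]
      simp only [Units.val_neg, Units.val_one, neg_zsmul, one_zsmul]
      refine ⟨?_, ?_, ?_⟩
      · rw [show s01⁻¹ (0:Fin 3) = 1 by decide, hb, neg_neg]
      · rw [show s01⁻¹ (1:Fin 3) = 0 by decide, hb]
      · rw [show s01⁻¹ (2:Fin 3) = 2 by decide, hc0, neg_zero]
end Distinct
section Classify

def s12' : Equiv.Perm (Fin 3) := Equiv.swap 1 2
def ρ : Equiv.Perm (Fin 3) := s12' * s01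

lemma smul_perm (σ : Equiv.Perm (Fin 3)) (t : G2Torus) (i : Fin 3) :
    (((σ, (1:ℤˣ)) : W) • t).1 i = t.1 (σ⁻¹ i) := by
  rw [smul_coe]
  simp only [Units.val_one, one_zsmul]

lemma mem6 {H : Subgroup W} (h : H = ⊥ ∨ H = H2 ∨ H = H3 ∨ H = H4 ∨ H = H5 ∨ H = ⊤) :
    H ∈ ({⊥, H2, H3, H4, H5, (⊤ : Subgroup W)} : Set (Subgroup W)) := by
  simpa [Set.mem_insert_iff] using h

lemma classify (t : G2Torus) : ∃ w : W, MulAction.stabilizer W (w • t) ∈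
    ({⊥, H2, H3, H4, H5, (⊤ : Subgroup W)} : Set (Subgroup W)) := by
  by_cases h01 : t.1 0 = t.1 1
  · by_cases h02 : t.1 0 = t.1 2
    · refine ⟨1, ?_⟩
      rw [one_smul]
      have hc : ∀ i, t.1 i = t.1 0 := by
        intro i
        rcases fin3 i with rfl | rfl | rfl
        · rfl
        · exact h01.symm
        · exact h02.symm
      by_cases h0 : t.1 0 = 0
      · rw [stab_top t (fun i => (hc i).trans h0)]
        exact mem6 (by tauto)
      · rw [stab_H5 t hc h0]
        exact mem6 (by tauto)
    · refine ⟨1, ?_⟩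
      rw [one_smul]
      by_cases h2 : t.1 0 + t.1 0 = 0
      · rw [stab_two_eq_H4 t h01.symm (Ne.symm h02) h2]
        exact mem6 (by tauto)
      · rw [stab_two_eq_H2 t h01.symm (Ne.symm h02) h2]
        exact mem6 (by tauto)
  · by_cases h02 : t.1 0 = t.1 2
    · -- a = c ≠ b : permute with s12' to get (a, c, b)
      refine ⟨(s12', 1), ?_⟩
      set t' := ((s12', (1:ℤˣ)) : W) • t with ht'
      have c0 : t'.1 0 = t.1 0 := by rw [smul_perm, show s12'⁻¹ (0:Fin 3) = 0 by decide]
      have c1 : t'.1 1 = t.1 2 := by rw [smul_perm, show s12'⁻¹ (1:Fin 3) = 2 by decide]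
      have c2 : t'.1 2 = t.1 1 := by rw [smul_perm, show s12'⁻¹ (2:Fin 3) = 1 by decide]
      by_cases h2 : t'.1 0 + t'.1 0 = 0
      · rw [stab_two_eq_H4 t' (by rw [c1, c0]; exact h02.symm)
          (by rw [c2, c0]; exact fun h => h01 h.symm) h2]
        exact mem6 (by tauto)
      · rw [stab_two_eq_H2 t' (by rw [c1, c0]; exact h02.symm)
          (by rw [c2, c0]; exact fun h => h01 h.symm) h2]
        exact mem6 (by tauto)
    · by_cases h12 : t.1 1 = t.1 2
      · -- b = c ≠ a : permute with ρ to get (b, c, a)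
        refine ⟨(ρ, 1), ?_⟩
        set t' := ((ρ, (1:ℤˣ)) : W) • t with ht'
        have c0 : t'.1 0 = t.1 1 := by rw [smul_perm, show ρ⁻¹ (0:Fin 3) = 1 by decide]
        have c1 : t'.1 1 = t.1 2 := by rw [smul_perm, show ρ⁻¹ (1:Fin 3) = 2 by decide]
        have c2 : t'.1 2 = t.1 0 := by rw [smul_perm, show ρ⁻¹ (2:Fin 3) = 0 by decide]
        by_cases h2 : t'.1 0 + t'.1 0 = 0
        · rw [stab_two_eq_H4 t' (by rw [c1, c0]; exact h12.symm)
            (by rw [c2, c0]; exact h01) h2]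
          exact mem6 (by tauto)
        · rw [stab_two_eq_H2 t' (by rw [c1, c0]; exact h12.symm)
            (by rw [c2, c0]; exact h01) h2]
          exact mem6 (by tauto)
      · -- all distinct
        by_cases hz0 : t.1 0 = 0
        · refine ⟨(ρ, 1), ?_⟩
          set t' := ((ρ, (1:ℤˣ)) : W) • t with ht'
          have c0 : t'.1 0 = t.1 1 := by rw [smul_perm, show ρ⁻¹ (0:Fin 3) = 1 by decide]
          have c1 : t'.1 1 = t.1 2 := by rw [smul_perm, show ρ⁻¹ (1:Fin 3) = 2 by decide]
          have c2 : t'.1 2 = t.1 0 := by rw [smul_perm, show ρ⁻¹ (2:Fin 3) = 0 by decide]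
          rw [stab_H3 t' (by rw [c0, c1]; exact h12) (by rw [c0, c2]; exact fun h => h01 h.symm)
            (by rw [c1, c2]; exact fun h => h02 h.symm) (by rw [c2]; exact hz0)]
          exact mem6 (by tauto)
        · by_cases hz1 : t.1 1 = 0
          · refine ⟨(s12', 1), ?_⟩
            set t' := ((s12', (1:ℤˣ)) : W) • t with ht'
            have c0 : t'.1 0 = t.1 0 := by rw [smul_perm, show s12'⁻¹ (0:Fin 3) = 0 by decide]
            have c1 : t'.1 1 = t.1 2 := by
              rw [smul_perm, show s12'⁻¹ (1:Fin 3) = 2 by decide]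
            have c2 : t'.1 2 = t.1 1 := by
              rw [smul_perm, show s12'⁻¹ (2:Fin 3) = 1 by decide]
            rw [stab_H3 t' (by rw [c0, c1]; exact h02) (by rw [c0, c2]; exact h01)
              (by rw [c1, c2]; exact fun h => h12 h.symm) (by rw [c2]; exact hz1)]
            exact mem6 (by tauto)
          · by_cases hz2 : t.1 2 = 0
            · refine ⟨1, ?_⟩
              rw [one_smul, stab_H3 t h01 h02 h12 hz2]
              exact mem6 (by tauto)
            · refine ⟨1, ?_⟩
              rw [one_smul, stab_bot t h01 h02 h12 hz0 hz1 hz2]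
              exact mem6 (by tauto)

end Classify
section Conj

abbrev QW := Quotient (MulAction.orbitRel (ConjAct W) (Subgroup W))

def q (H : Subgroup W) : QW :=
  Quotient.mk (MulAction.orbitRel (ConjAct W) (Subgroup W)) H

lemma q_smul (w : W) (t : G2Torus) :
    q (MulAction.stabilizer W (w • t)) = q (MulAction.stabilizer W t) := by
  apply Quotient.sound
  show MulAction.orbitRel (ConjAct W) (Subgroup W) _ _
  rw [MulAction.orbitRel_apply, MulAction.mem_orbit_iff]
  refine ⟨ConjAct.toConjAct w, ?_⟩
  rw [MulAction.stabilizer_smul_eq_stabilizer_map_conj, Subgroup.pointwise_smul_def]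
  have : (MulDistribMulAction.toMonoidEnd (ConjAct W) W (ConjAct.toConjAct w))
      = ((MulAut.conj w).toMonoidHom : W →* W) := by
    apply MonoidHom.ext
    intro y
    show ConjAct.toConjAct w • y = w * y * w⁻¹
    rw [ConjAct.smul_def, ConjAct.ofConjAct_toConjAct]
  rw [this]

lemma exists_conj {H H' : Subgroup W} (h : q H = q H') :
    ∃ u : W, ∀ x, x ∈ H ↔ ∃ y ∈ H', u * y * u⁻¹ = x := by
  have hr : MulAction.orbitRel (ConjAct W) (Subgroup W) H H' := Quotient.exact h
  rw [MulAction.orbitRel_apply, MulAction.mem_orbit_iff] at hr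
  obtain ⟨g, hg⟩ := hr
  refine ⟨ConjAct.ofConjAct g, fun x => ?_⟩
  rw [← hg, Subgroup.mem_pointwise_smul_iff_inv_smul_mem]
  rw [ConjAct.smul_def, ConjAct.ofConjAct_inv]
  constructor
  · intro hx
    refine ⟨_, hx, ?_⟩
    group
  · rintro ⟨y, hy, rfl⟩
    have : (ConjAct.ofConjAct g)⁻¹ * (ConjAct.ofConjAct g * y * (ConjAct.ofConjAct g)⁻¹) *
        (ConjAct.ofConjAct g)⁻¹⁻¹ = y := by group
    rwa [this]

lemma conj_fst (u y : W) : (u * y * u⁻¹).1 = u.1 * y.1 * u.1⁻¹ := rfl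

lemma conj_snd (u y : W) : (u * y * u⁻¹).2 = y.2 := by
  show u.2 * y.2 * u.2⁻¹ = y.2
  rw [mul_comm u.2 y.2, mul_assoc, mul_inv_cancel, mul_one]

lemma inv_A {H H' : Subgroup W} (h : q H = q H') :
    (∃ x ∈ H, x.1 ≠ 1) ↔ (∃ x ∈ H', x.1 ≠ 1) := by
  obtain ⟨u, hu⟩ := exists_conj h
  constructor
  · rintro ⟨x, hx, hx1⟩
    obtain ⟨y, hy, rfl⟩ := (hu x).mp hx
    exact ⟨y, hy, fun h1 => hx1 (by rw [conj_fst, h1]; group)⟩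
  · rintro ⟨y, hy, hy1⟩
    refine ⟨u * y * u⁻¹, (hu _).mpr ⟨y, hy, rfl⟩, fun h1 => hy1 ?_⟩
    rw [conj_fst, conj_eq_one_iff] at h1
    exact h1

lemma inv_B {H H' : Subgroup W} (h : q H = q H') :
    (∃ x ∈ H, x.2 ≠ 1) ↔ (∃ x ∈ H', x.2 ≠ 1) := by
  obtain ⟨u, hu⟩ := exists_conj h
  constructor
  · rintro ⟨x, hx, hx1⟩
    obtain ⟨y, hy, rfl⟩ := (hu x).mp hx
    exact ⟨y, hy, fun h1 => hx1 (by rw [conj_snd]; exact h1)⟩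
  · rintro ⟨y, hy, hy1⟩
    exact ⟨u * y * u⁻¹, (hu _).mpr ⟨y, hy, rfl⟩, by rw [conj_snd]; exact hy1⟩

lemma inv_C {H H' : Subgroup W} (h : q H = q H') :
    (∃ x ∈ H, x.1 * x.1 ≠ 1) ↔ (∃ x ∈ H', x.1 * x.1 ≠ 1) := by
  obtain ⟨u, hu⟩ := exists_conj h
  have key : ∀ (u y : W), (u * y * u⁻¹).1 * (u * y * u⁻¹).1 = u.1 * (y.1 * y.1) * u.1⁻¹ := by
    intro u y
    rw [conj_fst]
    group
  constructor
  · rintro ⟨x, hx, hx1⟩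
    obtain ⟨y, hy, rfl⟩ := (hu x).mp hx
    refine ⟨y, hy, fun h1 => hx1 ?_⟩
    rw [key, h1]
    group
  · rintro ⟨y, hy, hy1⟩
    refine ⟨u * y * u⁻¹, (hu _).mpr ⟨y, hy, rfl⟩, fun h1 => hy1 ?_⟩
    rw [key, conj_eq_one_iff] at h1
    exact h1

lemma central_elt (u : W) : u * ((1, -1) : W) * u⁻¹ = ((1, -1) : W) := by
  have h1 : (u * ((1, -1) : W) * u⁻¹).1 = 1 := by
    rw [conj_fst]
    show u.1 * 1 * u.1⁻¹ = 1
    group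
  have h2 : (u * ((1, -1) : W) * u⁻¹).2 = -1 := by rw [conj_snd]
  exact Prod.ext h1 h2

lemma inv_Z {H H' : Subgroup W} (h : q H = q H') :
    (((1, -1) : W) ∈ H ↔ ((1, -1) : W) ∈ H') := by
  obtain ⟨u, hu⟩ := exists_conj h
  rw [hu]
  constructor
  · rintro ⟨y, hy, hyy⟩
    have hy' : y = u⁻¹ * ((1, -1) : W) * u := by rw [← hyy]; group
    have hc : u⁻¹ * ((1, -1) : W) * u = ((1, -1) : W) := by
      have := central_elt u⁻¹
      rwa [inv_inv] at this
    exact (hy'.trans hc) ▸ hy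
  · intro hy
    exact ⟨(1, -1), hy, central_elt u⟩

end Conj
section Points

noncomputable def pt (x y z : ℝ) (h : ((x + y + z : ℝ) : AddCircle (1:ℝ)) = 0) : G2Torus :=
  ⟨![(x : AddCircle (1:ℝ)), (y : AddCircle (1:ℝ)), (z : AddCircle (1:ℝ))], by
    rw [Fin.sum_univ_three]
    show (x : AddCircle (1:ℝ)) + (y : AddCircle (1:ℝ)) + (z : AddCircle (1:ℝ)) = 0
    rw [← ac_coe_add, ← ac_coe_add]
    exact h⟩

lemma pt_c (x y z : ℝ) (h) : (pt x y z h).1 0 = (x : AddCircle (1:ℝ))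
    ∧ (pt x y z h).1 1 = (y : AddCircle (1:ℝ)) ∧ (pt x y z h).1 2 = (z : AddCircle (1:ℝ)) :=
  ⟨rfl, rfl, rfl⟩

noncomputable def p1 : G2Torus := pt (1/7) (2/7) (4/7) (by norm_num [ac_one])
noncomputable def p2 : G2Torus := pt (1/5) (1/5) (3/5) (by norm_num [ac_one])
noncomputable def p3 : G2Torus := pt (1/5) (4/5) 0 (by norm_num [ac_one])
noncomputable def p4 : G2Torus := pt (1/2) (1/2) 0 (by norm_num [ac_one])
noncomputable def p5 : G2Torus := pt (1/3) (1/3) (1/3) (by norm_num [ac_one])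
noncomputable def p6 : G2Torus := pt 0 0 0 (by norm_num [ac_zero])

lemma stab_p1 : MulAction.stabilizer W p1 = ⊥ := by
  apply stab_bot
  · exact (ac_ne (by norm_num) (by norm_num)).symm
  · exact (ac_ne (by norm_num) (by norm_num)).symm
  · exact (ac_ne (by norm_num) (by norm_num)).symm
  · exact fun h => ac_ne_zero (by norm_num) (by norm_num) h
  · exact fun h => ac_ne_zero (by norm_num) (by norm_num) h
  · exact fun h => ac_ne_zero (by norm_num) (by norm_num) h

lemma stab_p2 : MulAction.stabilizer W p2 = H2 := by
  apply stab_two_eq_H2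
  · rfl
  · exact ac_ne (by norm_num) (by norm_num)
  · intro h
    rw [show (p2.1 0) = ((1/5 : ℝ) : AddCircle (1:ℝ)) from rfl, ← ac_coe_add] at h
    exact ac_ne_zero (by norm_num) (by norm_num) h

lemma stab_p3 : MulAction.stabilizer W p3 = H3 := by
  apply stab_H3
  · exact (ac_ne (by norm_num) (by norm_num)).symm
  · exact ac_ne (by norm_num) (by norm_num)
  · exact ac_ne (by norm_num) (by norm_num)
  · exact ac_zero

lemma stab_p4 : MulAction.stabilizer W p4 = H4 := by
  apply stab_two_eq_H4
  · rfl
  · exact (ac_ne (by norm_num) (by norm_num)).symm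
  · rw [show (p4.1 0) = ((1/2 : ℝ) : AddCircle (1:ℝ)) from rfl, ← ac_coe_add]
    norm_num [ac_one]

lemma stab_p5 : MulAction.stabilizer W p5 = H5 := by
  apply stab_H5
  · intro i
    rcases fin3 i with rfl | rfl | rfl <;> rfl
  · exact ac_ne_zero (by norm_num) (by norm_num)

lemma stab_p6 : MulAction.stabilizer W p6 = ⊤ := by
  apply stab_top
  intro i
  rcases fin3 i with rfl | rfl | rfl <;> exact ac_zero

end Points
section Profiles

lemma notA_bot : ¬ ∃ x ∈ (⊥ : Subgroup W), x.1 ≠ 1 := by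
  rintro ⟨x, hx, h1⟩
  rw [Subgroup.mem_bot] at hx
  exact h1 (by rw [hx]; rfl)

lemma A_H2 : ∃ x ∈ H2, x.1 ≠ 1 := ⟨(s01, 1), Or.inr rfl, by decide⟩
lemma A_H3 : ∃ x ∈ H3, x.1 ≠ 1 := ⟨(s01, -1), Or.inr rfl, by decide⟩
lemma A_H4 : ∃ x ∈ H4, x.1 ≠ 1 := ⟨(s01, 1), Or.inr rfl, by decide⟩
lemma A_H5 : ∃ x ∈ H5, x.1 ≠ 1 := ⟨(s01, 1), rfl, by decide⟩
lemma A_top : ∃ x ∈ (⊤ : Subgroup W), x.1 ≠ 1 := ⟨(s01, 1), trivial, by decide⟩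

lemma notB_H2 : ¬ ∃ x ∈ H2, x.2 ≠ 1 := by
  rintro ⟨x, hx, h1⟩
  rcases hx with h | h <;> rw [h] at h1 <;> exact h1 rfl

lemma notB_H5 : ¬ ∃ x ∈ H5, x.2 ≠ 1 := by
  rintro ⟨x, hx, h1⟩
  exact h1 hx

lemma B_H3 : ∃ x ∈ H3, x.2 ≠ 1 := ⟨(s01, -1), Or.inr rfl, by decide⟩
lemma B_H4 : ∃ x ∈ H4, x.2 ≠ 1 := ⟨(1, -1), Or.inl rfl, by decide⟩
lemma B_top : ∃ x ∈ (⊤ : Subgroup W), x.2 ≠ 1 := ⟨(1, -1), trivial, by decide⟩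

lemma notC_H2 : ¬ ∃ x ∈ H2, x.1 * x.1 ≠ 1 := by
  rintro ⟨x, hx, h1⟩
  rcases hx with h | h <;> rw [h] at h1 <;> exact h1 (by decide)

lemma notC_H3 : ¬ ∃ x ∈ H3, x.1 * x.1 ≠ 1 := by
  rintro ⟨x, hx, h1⟩
  rcases hx with h | h <;> rw [h] at h1 <;> exact h1 (by decide)

lemma notC_H4 : ¬ ∃ x ∈ H4, x.1 * x.1 ≠ 1 := by
  rintro ⟨x, hx, h1⟩
  rcases hx with h | h <;> rw [h] at h1 <;> exact h1 (by decide)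

lemma C_H5 : ∃ x ∈ H5, x.1 * x.1 ≠ 1 := ⟨(ρ, 1), rfl, by decide⟩
lemma C_top : ∃ x ∈ (⊤ : Subgroup W), x.1 * x.1 ≠ 1 := ⟨(ρ, 1), trivial, by decide⟩

lemma notZ_H3 : ((1, -1) : W) ∉ H3 := by
  intro h
  rcases h with h | h <;> exact absurd h (by decide)

lemma Z_H4 : ((1, -1) : W) ∈ H4 := Or.inl rfl

-- distinctness
lemma n12 : q ⊥ ≠ q H2 := fun h => notA_bot ((inv_A h).mpr A_H2)
lemma n13 : q ⊥ ≠ q H3 := fun h => notA_bot ((inv_A h).mpr A_H3)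
lemma n14 : q ⊥ ≠ q H4 := fun h => notA_bot ((inv_A h).mpr A_H4)
lemma n15 : q ⊥ ≠ q H5 := fun h => notA_bot ((inv_A h).mpr A_H5)
lemma n16 : q ⊥ ≠ q ⊤ := fun h => notA_bot ((inv_A h).mpr A_top)
lemma n23 : q H2 ≠ q H3 := fun h => notB_H2 ((inv_B h).mpr B_H3)
lemma n24 : q H2 ≠ q H4 := fun h => notB_H2 ((inv_B h).mpr B_H4)
lemma n25 : q H2 ≠ q H5 := fun h => notC_H2 ((inv_C h).mpr C_H5)
lemma n26 : q H2 ≠ q ⊤ := fun h => notB_H2 ((inv_B h).mpr B_top)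
lemma n34 : q H3 ≠ q H4 := fun h => notZ_H3 ((inv_Z h).mpr Z_H4)
lemma n35 : q H3 ≠ q H5 := fun h => notC_H3 ((inv_C h).mpr C_H5)
lemma n36 : q H3 ≠ q ⊤ := fun h => notC_H3 ((inv_C h).mpr C_top)
lemma n45 : q H4 ≠ q H5 := fun h => notC_H4 ((inv_C h).mpr C_H5)
lemma n46 : q H4 ≠ q ⊤ := fun h => notC_H4 ((inv_C h).mpr C_top)
lemma n56 : q H5 ≠ q ⊤ := fun h => notB_H5 ((inv_B h).mpr B_top)

end Profiles

lemma hset : {C : QW | ∃ t : G2Torus, C = q (MulAction.stabilizer W t)}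
    = {q ⊥, q H2, q H3, q H4, q H5, q ⊤} := by
  ext C
  simp only [Set.mem_setOf_eq, Set.mem_insert_iff, Set.mem_singleton_iff]
  constructor
  · rintro ⟨t, rfl⟩
    obtain ⟨w, hw⟩ := classify t
    simp only [Set.mem_insert_iff, Set.mem_singleton_iff] at hw
    rcases hw with h | h | h | h | h | h <;>
      rw [← q_smul w t, h] <;> tauto
  · rintro (rfl | rfl | rfl | rfl | rfl | rfl)
    · exact ⟨p1, by rw [stab_p1]⟩
    · exact ⟨p2, by rw [stab_p2]⟩
    · exact ⟨p3, by rw [stab_p3]⟩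
    · exact ⟨p4, by rw [stab_p4]⟩
    · exact ⟨p5, by rw [stab_p5]⟩
    · exact ⟨p6, by rw [stab_p6]⟩


theorem genus_number_G2 :
    Nat.card {C : Quotient (MulAction.orbitRel (ConjAct (Equiv.Perm (Fin 3) × ℤˣ))
        (Subgroup (Equiv.Perm (Fin 3) × ℤˣ))) //
      ∃ t : G2Torus,
        C = Quotient.mk (MulAction.orbitRel (ConjAct (Equiv.Perm (Fin 3) × ℤˣ))
              (Subgroup (Equiv.Perm (Fin 3) × ℤˣ)))
            (MulAction.stabilizer (Equiv.Perm (Fin 3) × ℤˣ) t)} = 6 := by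
  have h1 : Nat.card {C : QW // ∃ t : G2Torus, C = q (MulAction.stabilizer W t)} = 6 := by
    have he : {C : QW // ∃ t : G2Torus, C = q (MulAction.stabilizer W t)}
        = ↥{C : QW | ∃ t : G2Torus, C = q (MulAction.stabilizer W t)} := rfl
    rw [he, hset, Nat.card_coe_set_eq]
    have f5 : ({q ⊤} : Set QW).Finite := Set.finite_singleton _
    have f4 : ({q H5, q ⊤} : Set QW).Finite := f5.insert _
    have f3 : ({q H4, q H5, q ⊤} : Set QW).Finite := f4.insert _
    have f2 : ({q H3, q H4, q H5, q ⊤} : Set QW).Finite := f3.insert _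
    have f1 : ({q H2, q H3, q H4, q H5, q ⊤} : Set QW).Finite := f2.insert _
    rw [Set.ncard_insert_of_notMem (by
        simp only [Set.mem_insert_iff, Set.mem_singleton_iff]
        push_neg
        exact ⟨n12, n13, n14, n15, n16⟩) f1]
    rw [Set.ncard_insert_of_notMem (by
        simp only [Set.mem_insert_iff, Set.mem_singleton_iff]
        push_neg
        exact ⟨n23, n24, n25, n26⟩) f2]
    rw [Set.ncard_insert_of_notMem (by
        simp only [Set.mem_insert_iff, Set.mem_singleton_iff]
        push_neg
        exact ⟨n34, n35, n36⟩) f3]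
    rw [Set.ncard_insert_of_notMem (by
        simp only [Set.mem_insert_iff, Set.mem_singleton_iff]
        push_neg
        exact ⟨n45, n46⟩) f4]
    rw [Set.ncard_pair n56]
  exact h1
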